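/- Let π, the presentation complex C₂ → C₁ → C₀, α and γ be as above, and let s = Π_{k=1}^c w_k ρ_{j_k}^{ε_k} w_k⁻¹ be an identity of the presentation: w_k ∈ F, ε_k = ±1, and the image of s under the homomorphism ψ: P ∗ F → F with ψ(ρ_j) = r_j and ψ(g_i) = g_i is the trivial element of F. Let C₃ have a basis element h³ with ∂₃(h³) = Σ_{k=1}^c ε_k w̄_k h²_{j_k} ∈ C₂, where w̄_k is the image of w_k in ℤ[π]. Define Δ₀(h³) = h⁰⊗h³ + h³⊗h⁰ + Σ_{k=1}^c ε_k (α(w_k) ⊗ w_k h²_{j_k} + w_k h²_{j_k} ⊗ α(w_k)) + Σ_{k=1}^c δ_k w_k·(h²_{j_k} ⊗ α(r_{j_k})) − Σ_{1 ≤ l < k ≤ c} ε_l w_l h²_{j_l} ⊗ ε_k w_k α(r_{j_k}), where δ_k = (ε_k − 1)/2 and · denotes the diagonal action. Then together with Trotter's formulae for Δ₀ in degrees ≤ 2, the chain map condition holds in degree 3: ∂_⊗(Δ₀(h³)) = Δ₀(∂₃(h³)). -/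

import Mathlib

open scoped TensorProduct

namespace stmt8

variable {π : Type*} [Group π]

/-- The action of `g ∈ π` on a left `ℤ[π]`-module, as a `ℤ`-linear map. -/
noncomputable def actL (M : Type*) [AddCommGroup M] [Module (MonoidAlgebra ℤ π) M]
    (g : π) : M →ₗ[ℤ] M :=
  (DistribMulAction.toAddMonoidHom M
    ((MonoidAlgebra.of ℤ π g) : MonoidAlgebra ℤ π)).toIntLinearMap

/-- The representation of `π` underlying a left `ℤ[π]`-module. -/
noncomputable def repOf (M : Type*) [AddCommGroup M] [Module (MonoidAlgebra ℤ π) M] :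
    Representation ℤ π M where
  toFun := actL M
  map_one' := by
    ext x
    change (MonoidAlgebra.of ℤ π 1 : MonoidAlgebra ℤ π) • x = x
    rw [map_one, one_smul]
  map_mul' g h := by
    ext x
    change (MonoidAlgebra.of ℤ π (g * h) : MonoidAlgebra ℤ π) • x
      = (MonoidAlgebra.of ℤ π g : MonoidAlgebra ℤ π)
        • (MonoidAlgebra.of ℤ π h : MonoidAlgebra ℤ π) • x
    rw [map_mul, mul_smul]

/-- The diagonal action of `x ∈ ℤ[π]` on `M ⊗_ℤ N`. -/
noncomputable def diagT (M N : Type*) [AddCommGroup M] [Module (MonoidAlgebra ℤ π) M]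
    [AddCommGroup N] [Module (MonoidAlgebra ℤ π) N] (x : MonoidAlgebra ℤ π) :
    (M ⊗[ℤ] N) →ₗ[ℤ] (M ⊗[ℤ] N) :=
  Representation.asAlgebraHom ((repOf M).tprod (repOf N)) x

variable (π)

/-- The image `gᵢ ∈ ℤ[π]` of a generator. -/
noncomputable def giA {a : ℕ} (ρ : FreeGroup (Fin a) →* π) (i : Fin a) :
    MonoidAlgebra ℤ π :=
  MonoidAlgebra.of ℤ π (ρ (FreeGroup.of i))

/-- The image `w̄ ∈ ℤ[π]` of a word `w ∈ F`. -/
noncomputable def wbar {a : ℕ} (ρ : FreeGroup (Fin a) →* π)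
    (w : FreeGroup (Fin a)) : MonoidAlgebra ℤ π :=
  MonoidAlgebra.of ℤ π (ρ w)

/-- `∂₁ : C₁ → C₀`, `x ↦ Σᵢ xᵢ(gᵢ-1)`. -/
noncomputable def d1L (a : ℕ) (ρ : FreeGroup (Fin a) →* π) :
    (Fin a → MonoidAlgebra ℤ π) →ₗ[ℤ] MonoidAlgebra ℤ π :=
  ∑ i : Fin a,
    (AddMonoidHom.mulRight (giA π ρ i - 1)).toIntLinearMap
      ∘ₗ (LinearMap.proj i : (Fin a → MonoidAlgebra ℤ π) →ₗ[ℤ] MonoidAlgebra ℤ π)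

/-- `∂₂ : C₂ → C₁`, `y ↦ Σⱼ yⱼ·α(rⱼ)`. -/
noncomputable def d2L (a b : ℕ) (ρ : FreeGroup (Fin a) →* π)
    (r : Fin b → FreeGroup (Fin a))
    (α : FreeGroup (Fin a) → (Fin a → MonoidAlgebra ℤ π)) :
    (Fin b → MonoidAlgebra ℤ π) →ₗ[ℤ] (Fin a → MonoidAlgebra ℤ π) :=
  ∑ j : Fin b,
    (LinearMap.toSpanSingleton (MonoidAlgebra ℤ π) (Fin a → MonoidAlgebra ℤ π)
        (α (r j))).toAddMonoidHom.toIntLinearMap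
      ∘ₗ (LinearMap.proj j : (Fin b → MonoidAlgebra ℤ π) →ₗ[ℤ] MonoidAlgebra ℤ π)

/-- `∂₃(h³) = Σ_k ε_k w̄_k h²_{j_k} ∈ C₂`. -/
noncomputable def bdry3 (a b c : ℕ) (ρ : FreeGroup (Fin a) →* π)
    (w : Fin c → FreeGroup (Fin a)) (jdx : Fin c → Fin b) (eps : Fin c → ℤ) :
    Fin b → MonoidAlgebra ℤ π :=
  ∑ k : Fin c, eps k • Pi.single (jdx k) (wbar π ρ (w k))

/-- `∂₃ : C₃ → C₂` (where `C₃ = ℤ[π]h³`). -/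
noncomputable def d3L (a b c : ℕ) (ρ : FreeGroup (Fin a) →* π)
    (w : Fin c → FreeGroup (Fin a)) (jdx : Fin c → Fin b) (eps : Fin c → ℤ) :
    MonoidAlgebra ℤ π →ₗ[ℤ] (Fin b → MonoidAlgebra ℤ π) :=
  (LinearMap.toSpanSingleton (MonoidAlgebra ℤ π) (Fin b → MonoidAlgebra ℤ π)
      (bdry3 π a b c ρ w jdx eps)).toAddMonoidHom.toIntLinearMap

/-- The `C₁ ⊗ C₂`-component of `Δ₀(h³)`:
`Σ_k ε_k (α(w_k) ⊗ w_k h²_{j_k})`. -/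
noncomputable def t12 (a b c : ℕ) (ρ : FreeGroup (Fin a) →* π)
    (α : FreeGroup (Fin a) → (Fin a → MonoidAlgebra ℤ π))
    (w : Fin c → FreeGroup (Fin a)) (jdx : Fin c → Fin b) (eps : Fin c → ℤ) :
    (Fin a → MonoidAlgebra ℤ π) ⊗[ℤ] (Fin b → MonoidAlgebra ℤ π) :=
  ∑ k : Fin c, eps k •
    ((α (w k)) ⊗ₜ[ℤ] (Pi.single (jdx k) (wbar π ρ (w k))))

/-- The `C₂ ⊗ C₁`-component of `Δ₀(h³)`:
`Σ_k ε_k (w_k h²_{j_k} ⊗ α(w_k)) + Σ_k δ_k w_k·(h²_{j_k} ⊗ α(r_{j_k}))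
 - Σ_{l<k} ε_l w_l h²_{j_l} ⊗ ε_k w_k α(r_{j_k})`, with `δ_k = (ε_k-1)/2`. -/
noncomputable def t21 (a b c : ℕ) (ρ : FreeGroup (Fin a) →* π)
    (r : Fin b → FreeGroup (Fin a))
    (α : FreeGroup (Fin a) → (Fin a → MonoidAlgebra ℤ π))
    (w : Fin c → FreeGroup (Fin a)) (jdx : Fin c → Fin b) (eps : Fin c → ℤ) :
    (Fin b → MonoidAlgebra ℤ π) ⊗[ℤ] (Fin a → MonoidAlgebra ℤ π) :=
  (∑ k : Fin c, eps k •
      ((Pi.single (jdx k) (wbar π ρ (w k))) ⊗ₜ[ℤ] (α (w k))))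
  + (∑ k : Fin c, ((eps k - 1) / 2) •
      (diagT _ _ (wbar π ρ (w k))
        ((Pi.single (jdx k) (1 : MonoidAlgebra ℤ π)) ⊗ₜ[ℤ] (α (r (jdx k))))))
  - (∑ k : Fin c, ∑ l ∈ Finset.Iio k,
      (eps l • Pi.single (jdx l) (wbar π ρ (w l)))
        ⊗ₜ[ℤ] (eps k • ((wbar π ρ (w k)) • α (r (jdx k)))))

/-- `Δ₀` on `C₀`, extending `h⁰ ⊗ h⁰`. -/
noncomputable def D00 (x : MonoidAlgebra ℤ π) :
    MonoidAlgebra ℤ π ⊗[ℤ] MonoidAlgebra ℤ π :=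
  diagT _ _ x ((1 : MonoidAlgebra ℤ π) ⊗ₜ[ℤ] (1 : MonoidAlgebra ℤ π))

/-- The `C₀ ⊗ C₂`-component of `Δ₀` on `C₂`. -/
noncomputable def D02 (a b : ℕ) (ρ : FreeGroup (Fin a) →* π)
    (y : Fin b → MonoidAlgebra ℤ π) :
    MonoidAlgebra ℤ π ⊗[ℤ] (Fin b → MonoidAlgebra ℤ π) :=
  ∑ j : Fin b, diagT _ _ (y j)
    ((1 : MonoidAlgebra ℤ π) ⊗ₜ[ℤ] Pi.single j (1 : MonoidAlgebra ℤ π))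

/-- The `C₁ ⊗ C₁`-component of `Δ₀` on `C₂`, extending `-γ(rⱼ)`. -/
noncomputable def D11 (a b : ℕ) (ρ : FreeGroup (Fin a) →* π)
    (r : Fin b → FreeGroup (Fin a))
    (γ : FreeGroup (Fin a) →
      (Fin a → MonoidAlgebra ℤ π) ⊗[ℤ] (Fin a → MonoidAlgebra ℤ π))
    (y : Fin b → MonoidAlgebra ℤ π) :
    (Fin a → MonoidAlgebra ℤ π) ⊗[ℤ] (Fin a → MonoidAlgebra ℤ π) :=
  ∑ j : Fin b, diagT _ _ (y j) (-(γ (r j)))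

/-- The `C₂ ⊗ C₀`-component of `Δ₀` on `C₂`, extending `h²ⱼ ⊗ h⁰`. -/
noncomputable def D20 (a b : ℕ) (ρ : FreeGroup (Fin a) →* π)
    (y : Fin b → MonoidAlgebra ℤ π) :
    (Fin b → MonoidAlgebra ℤ π) ⊗[ℤ] MonoidAlgebra ℤ π :=
  ∑ j : Fin b, diagT _ _ (y j)
    ((Pi.single j (1 : MonoidAlgebra ℤ π)) ⊗ₜ[ℤ] (1 : MonoidAlgebra ℤ π))

end stmt8
namespace stmt8aux
open stmt8

variable {π : Type*} [Group π]

lemma diagT_of_tmul (M N : Type*) [AddCommGroup M] [Module (MonoidAlgebra ℤ π) M]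
    [AddCommGroup N] [Module (MonoidAlgebra ℤ π) N] (g : π) (x : M) (y : N) :
    diagT M N (MonoidAlgebra.of ℤ π g) (x ⊗ₜ[ℤ] y)
      = ((MonoidAlgebra.of ℤ π g : MonoidAlgebra ℤ π) • x) ⊗ₜ[ℤ]
        ((MonoidAlgebra.of ℤ π g : MonoidAlgebra ℤ π) • y) := by
  show Representation.asAlgebraHom _ _ _ = _
  rw [Representation.asAlgebraHom_of, Representation.tprod_apply]
  rfl

lemma diagT_one (M N : Type*) [AddCommGroup M] [Module (MonoidAlgebra ℤ π) M]
    [AddCommGroup N] [Module (MonoidAlgebra ℤ π) N] :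
    diagT M N (1 : MonoidAlgebra ℤ π) = LinearMap.id := by
  show Representation.asAlgebraHom _ 1 = _
  rw [map_one]; rfl

lemma diagT_mul (M N : Type*) [AddCommGroup M] [Module (MonoidAlgebra ℤ π) M]
    [AddCommGroup N] [Module (MonoidAlgebra ℤ π) N] (x y : MonoidAlgebra ℤ π)
    (t : M ⊗[ℤ] N) :
    diagT M N (x * y) t = diagT M N x (diagT M N y t) := by
  show Representation.asAlgebraHom _ (x * y) t = _
  rw [map_mul]; rfl

lemma diagT_add (M N : Type*) [AddCommGroup M] [Module (MonoidAlgebra ℤ π) M]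
    [AddCommGroup N] [Module (MonoidAlgebra ℤ π) N] (x y : MonoidAlgebra ℤ π)
    (t : M ⊗[ℤ] N) :
    diagT M N (x + y) t = diagT M N x t + diagT M N y t := by
  show Representation.asAlgebraHom _ (x + y) t = _
  rw [map_add]; rfl

lemma diagT_zsmul (M N : Type*) [AddCommGroup M] [Module (MonoidAlgebra ℤ π) M]
    [AddCommGroup N] [Module (MonoidAlgebra ℤ π) N] (n : ℤ) (x : MonoidAlgebra ℤ π)
    (t : M ⊗[ℤ] N) :
    diagT M N (n • x) t = n • diagT M N x t := by
  show Representation.asAlgebraHom _ (n • x) t = _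
  rw [map_zsmul]; rfl

end stmt8aux

namespace stmt8aux
open stmt8

variable {π : Type*} [Group π] {a b : ℕ}

lemma wbar_mul (ρ : FreeGroup (Fin a) →* π) (u v : FreeGroup (Fin a)) :
    wbar π ρ (u * v) = wbar π ρ u * wbar π ρ v := by
  unfold wbar; rw [map_mul, map_mul]

lemma wbar_one (ρ : FreeGroup (Fin a) →* π) : wbar π ρ (1 : FreeGroup (Fin a)) = 1 := by
  unfold wbar; rw [map_one, map_one]

lemma wbar_inv_mul (ρ : FreeGroup (Fin a) →* π) (u : FreeGroup (Fin a)) :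
    wbar π ρ u⁻¹ * wbar π ρ u = 1 := by
  rw [← wbar_mul, inv_mul_cancel, wbar_one]

lemma wbar_mul_inv (ρ : FreeGroup (Fin a) →* π) (u : FreeGroup (Fin a)) :
    wbar π ρ u * wbar π ρ u⁻¹ = 1 := by
  rw [← wbar_mul, mul_inv_cancel, wbar_one]

lemma d1L_apply (ρ : FreeGroup (Fin a) →* π) (v : Fin a → MonoidAlgebra ℤ π) :
    d1L π a ρ v = ∑ i, v i * (giA π ρ i - 1) := by
  unfold d1L
  rw [LinearMap.sum_apply]
  rfl

lemma d1L_smul (ρ : FreeGroup (Fin a) →* π) (x : MonoidAlgebra ℤ π)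
    (v : Fin a → MonoidAlgebra ℤ π) :
    d1L π a ρ (x • v) = x * d1L π a ρ v := by
  rw [d1L_apply, d1L_apply, Finset.mul_sum]
  refine Finset.sum_congr rfl fun i _ => ?_
  show (x • v) i * _ = _
  rw [Pi.smul_apply, smul_eq_mul, mul_assoc]

lemma d1L_single (ρ : FreeGroup (Fin a) →* π) (i : Fin a) (x : MonoidAlgebra ℤ π) :
    d1L π a ρ (Pi.single i x) = x * (giA π ρ i - 1) := by
  rw [d1L_apply]
  rw [Finset.sum_eq_single i]
  · rw [Pi.single_eq_same]
  · intro j _ hj; rw [Pi.single_eq_of_ne hj, zero_mul]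
  · intro h; exact absurd (Finset.mem_univ i) h

lemma d2L_apply (ρ : FreeGroup (Fin a) →* π) (r : Fin b → FreeGroup (Fin a))
    (α : FreeGroup (Fin a) → (Fin a → MonoidAlgebra ℤ π))
    (v : Fin b → MonoidAlgebra ℤ π) :
    d2L π a b ρ r α v = ∑ j, v j • α (r j) := by
  unfold d2L
  rw [LinearMap.sum_apply]
  rfl

lemma d2L_single (ρ : FreeGroup (Fin a) →* π) (r : Fin b → FreeGroup (Fin a))
    (α : FreeGroup (Fin a) → (Fin a → MonoidAlgebra ℤ π))
    (j : Fin b) (x : MonoidAlgebra ℤ π) :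
    d2L π a b ρ r α (Pi.single j x) = x • α (r j) := by
  rw [d2L_apply]
  rw [Finset.sum_eq_single j]
  · rw [Pi.single_eq_same]
  · intro i _ hi; rw [Pi.single_eq_of_ne hi, zero_smul]
  · intro h; exact absurd (Finset.mem_univ j) h

lemma d3L_apply (c : ℕ) (ρ : FreeGroup (Fin a) →* π)
    (w : Fin c → FreeGroup (Fin a)) (jdx : Fin c → Fin b) (eps : Fin c → ℤ)
    (x : MonoidAlgebra ℤ π) :
    d3L π a b c ρ w jdx eps x = x • bdry3 π a b c ρ w jdx eps := rfl

lemma single_eq_smul (j : Fin b) (x : MonoidAlgebra ℤ π) :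
    (Pi.single j x : Fin b → MonoidAlgebra ℤ π)
      = x • (Pi.single j (1 : MonoidAlgebra ℤ π) : Fin b → MonoidAlgebra ℤ π) := by
  funext i
  rcases eq_or_ne i j with rfl | h
  · simp
  · simp [Pi.single_eq_of_ne h]

end stmt8aux

namespace stmt8aux
open stmt8

variable {π : Type*} [Group π] {a : ℕ}
  (ρ : FreeGroup (Fin a) →* π)
  (α : FreeGroup (Fin a) → (Fin a → MonoidAlgebra ℤ π))

section alpha

variable (hα : ∀ u v : FreeGroup (Fin a),
      α (u * v) = α u + (MonoidAlgebra.of ℤ π (ρ u)) • α v)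

lemma wbar_def (u : FreeGroup (Fin a)) :
    wbar π ρ u = MonoidAlgebra.of ℤ π (ρ u) := rfl

include hα

lemma hα' (u v : FreeGroup (Fin a)) :
    α (u * v) = α u + wbar π ρ u • α v := hα u v

lemma alpha_one : α 1 = 0 := by
  have h := hα 1 1
  rw [one_mul, map_one, map_one, one_smul, left_eq_add] at h
  exact h

lemma alpha_inv (u : FreeGroup (Fin a)) :
    α u⁻¹ = -(wbar π ρ u⁻¹ • α u) := by
  have h := hα' ρ α hα u⁻¹ u
  rw [inv_mul_cancel, alpha_one ρ α hα] at h
  have h2 : wbar π ρ u⁻¹ • α u = - α u⁻¹ := by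
    rw [eq_neg_iff_add_eq_zero, add_comm]
    exact h.symm
  rw [h2, neg_neg]

lemma smul_alpha_inv (u : FreeGroup (Fin a)) :
    wbar π ρ u • α u⁻¹ = - α u := by
  rw [alpha_inv ρ α hα, smul_neg, smul_smul, wbar_mul_inv, one_smul]

lemma d1L_alpha_inv_step (u : FreeGroup (Fin a))
    (ih : d1L π a ρ (α u) = wbar π ρ u - 1) :
    d1L π a ρ (α u⁻¹) = wbar π ρ u⁻¹ - 1 := by
  rw [alpha_inv ρ α hα, map_neg, d1L_smul, ih, mul_sub, wbar_inv_mul, mul_one,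
    neg_sub]

lemma d1L_alpha (hα1 : ∀ i : Fin a, α (FreeGroup.of i) = Pi.single i 1)
    (u : FreeGroup (Fin a)) :
    d1L π a ρ (α u) = wbar π ρ u - 1 := by
  induction u using FreeGroup.induction_on with
  | C1 => rw [alpha_one ρ α hα, map_zero, wbar_one, sub_self]
  | of i =>
      have h0 : (pure i : FreeGroup (Fin a)) = FreeGroup.of i := rfl
      rw [hα1 i, d1L_single, one_mul]
      rfl
  | inv_of i ih => exact d1L_alpha_inv_step ρ α hα _ ih
  | mul u v ihu ihv =>
      rw [hα' ρ α hα, map_add, d1L_smul, ihu, ihv, wbar_mul]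
      noncomm_ring

lemma d1L_alpha_rel (u : FreeGroup (Fin a)) (hu : ρ u = 1)
    (hα1 : ∀ i : Fin a, α (FreeGroup.of i) = Pi.single i 1) :
    d1L π a ρ (α u) = 0 := by
  rw [d1L_alpha ρ α hα hα1, wbar_def, hu, map_one, sub_self]

end alpha

section gamma

variable (γ : FreeGroup (Fin a) →
      (Fin a → MonoidAlgebra ℤ π) ⊗[ℤ] (Fin a → MonoidAlgebra ℤ π))
  (hα : ∀ u v : FreeGroup (Fin a),
      α (u * v) = α u + (MonoidAlgebra.of ℤ π (ρ u)) • α v)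
  (hγ : ∀ u v : FreeGroup (Fin a),
      γ (u * v) = γ u + stmt8.diagT _ _ (MonoidAlgebra.of ℤ π (ρ u)) (γ v)
        + (α u) ⊗ₜ[ℤ] ((MonoidAlgebra.of ℤ π (ρ u)) • α v))

include hα hγ

lemma gamma_one : γ 1 = 0 := by
  have h := hγ 1 1
  rw [one_mul, map_one, map_one, one_smul, alpha_one ρ α hα,
    TensorProduct.zero_tmul, add_zero, diagT_one, LinearMap.id_apply,
    left_eq_add] at h
  exact h

lemma gamma_inv (u : FreeGroup (Fin a)) :
    γ u⁻¹ = diagT _ _ (wbar π ρ u⁻¹) ((α u) ⊗ₜ[ℤ] (α u) - γ u) := by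
  have h := hγ u u⁻¹
  rw [mul_inv_cancel, gamma_one ρ α γ hα hγ, ← wbar_def ρ u,
    smul_alpha_inv ρ α hα, TensorProduct.tmul_neg] at h
  have h0 : γ u + diagT _ _ (wbar π ρ u) (γ u⁻¹) + -((α u) ⊗ₜ[ℤ] (α u)) = 0 :=
    h.symm
  have h2 : diagT _ _ (wbar π ρ u) (γ u⁻¹) = (α u) ⊗ₜ[ℤ] (α u) - γ u := by
    rw [eq_sub_iff_add_eq, ← sub_eq_zero, ← h0]
    abel
  rw [← h2, ← diagT_mul, wbar_inv_mul, diagT_one, LinearMap.id_apply]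

end gamma

end stmt8aux

namespace stmt8aux
open stmt8

variable {π : Type*} [Group π] {a : ℕ}

/-- `pairs α L = Σ_{l<k} α(L_l) ⊗ α(L_k)` defined recursively. -/
noncomputable def pairs (α : FreeGroup (Fin a) → (Fin a → MonoidAlgebra ℤ π)) :
    List (FreeGroup (Fin a)) →
      (Fin a → MonoidAlgebra ℤ π) ⊗[ℤ] (Fin a → MonoidAlgebra ℤ π)
  | [] => 0
  | v :: T => (α v) ⊗ₜ[ℤ] ((T.map α).sum) + pairs α T

variable (ρ : FreeGroup (Fin a) →* π)
  (α : FreeGroup (Fin a) → (Fin a → MonoidAlgebra ℤ π))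
  (γ : FreeGroup (Fin a) →
      (Fin a → MonoidAlgebra ℤ π) ⊗[ℤ] (Fin a → MonoidAlgebra ℤ π))
  (hα : ∀ u v : FreeGroup (Fin a),
      α (u * v) = α u + (MonoidAlgebra.of ℤ π (ρ u)) • α v)
  (hγ : ∀ u v : FreeGroup (Fin a),
      γ (u * v) = γ u + stmt8.diagT _ _ (MonoidAlgebra.of ℤ π (ρ u)) (γ v)
        + (α u) ⊗ₜ[ℤ] ((MonoidAlgebra.of ℤ π (ρ u)) • α v))

include hα

lemma alpha_list_prod (L : List (FreeGroup (Fin a))) (hall : ∀ v ∈ L, ρ v = 1) :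
    α L.prod = (L.map α).sum := by
  induction L with
  | nil => exact alpha_one ρ α hα
  | cons v T ih =>
      rw [List.prod_cons, hα, hall v List.mem_cons_self, map_one, one_smul,
        ih (fun u hu => hall u (List.mem_cons_of_mem v hu)), List.map_cons,
        List.sum_cons]

include hγ

lemma gamma_list_prod (L : List (FreeGroup (Fin a))) (hall : ∀ v ∈ L, ρ v = 1) :
    γ L.prod = (L.map γ).sum + pairs α L := by
  induction L with
  | nil =>
      rw [List.prod_nil, gamma_one ρ α γ hα hγ, List.map_nil, List.sum_nil,
        zero_add]
      show (0 : _) = pairs α []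
      rfl
  | cons v T ih =>
      have hT : ∀ u ∈ T, ρ u = 1 := fun u hu => hall u (List.mem_cons_of_mem v hu)
      rw [List.prod_cons, hγ, hall v List.mem_cons_self, map_one, one_smul,
        diagT_one, LinearMap.id_apply, ih hT, alpha_list_prod ρ α hα T hT,
        List.map_cons, List.sum_cons]
      show _ = _ + ((α v) ⊗ₜ[ℤ] ((T.map α).sum) + pairs α T)
      abel

omit hα hγ

lemma map_ofFn_sum {M : Type*} [AddCommMonoid M] {c : ℕ}
    (f : Fin c → FreeGroup (Fin a)) (g : FreeGroup (Fin a) → M) :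
    (((List.ofFn f).map g).sum) = ∑ k, g (f k) := by
  rw [List.map_ofFn, Fin.sum_ofFn]
  rfl

lemma pairs_ofFn {c : ℕ} (f : Fin c → FreeGroup (Fin a)) :
    pairs α (List.ofFn f)
      = ∑ l, (α (f l)) ⊗ₜ[ℤ] (∑ k ∈ Finset.Ioi l, α (f k)) := by
  induction c with
  | zero => simp [pairs, List.ofFn_zero]
  | succ c ih =>
      rw [List.ofFn_succ]
      show (α (f 0)) ⊗ₜ[ℤ] (((List.ofFn fun i => f i.succ).map α).sum)
          + pairs α (List.ofFn fun i => f i.succ) = _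
      rw [ih (fun i => f i.succ), map_ofFn_sum, Fin.sum_univ_succ,
        Fin.sum_Ioi_zero]
      congr 1
      refine Finset.sum_congr rfl fun l _ => ?_
      rw [Fin.sum_Ioi_succ]

end stmt8aux

namespace stmt8aux
open stmt8

lemma sum_Iio_swap {M : Type*} [AddCommMonoid M] {c : ℕ} (f : Fin c → Fin c → M) :
    ∑ k, ∑ l ∈ Finset.Iio k, f l k = ∑ l, ∑ k ∈ Finset.Ioi l, f l k := by
  have key : ∀ (k l : Fin c),
      (if l ∈ Finset.Iio k then f l k else 0)
        = (if k ∈ Finset.Ioi l then f l k else 0) := by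
    intro k l
    simp [Finset.mem_Iio, Finset.mem_Ioi]
  calc ∑ k, ∑ l ∈ Finset.Iio k, f l k
      = ∑ k, ∑ l, if l ∈ Finset.Iio k then f l k else 0 := by
        refine Finset.sum_congr rfl fun k _ => ?_
        rw [Finset.sum_ite_mem, Finset.univ_inter]
    _ = ∑ l, ∑ k, if l ∈ Finset.Iio k then f l k else 0 := Finset.sum_comm
    _ = ∑ l, ∑ k ∈ Finset.Ioi l, f l k := by
        refine Finset.sum_congr rfl fun l _ => ?_
        simp_rw [key]
        rw [Finset.sum_ite_mem, Finset.univ_inter]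

variable {π : Type*} [Group π]

lemma diagT_zero_apply (M N : Type*) [AddCommGroup M] [Module (MonoidAlgebra ℤ π) M]
    [AddCommGroup N] [Module (MonoidAlgebra ℤ π) N] (t : M ⊗[ℤ] N) :
    diagT M N (0 : MonoidAlgebra ℤ π) t = 0 := by
  show Representation.asAlgebraHom _ (0 : MonoidAlgebra ℤ π) t = 0
  rw [map_zero]
  rfl

lemma diagT_sum_apply (M N : Type*) [AddCommGroup M] [Module (MonoidAlgebra ℤ π) M]
    [AddCommGroup N] [Module (MonoidAlgebra ℤ π) N] {ι : Type*} (s : Finset ι)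
    (x : ι → MonoidAlgebra ℤ π) (t : M ⊗[ℤ] N) :
    diagT M N (∑ k ∈ s, x k) t = ∑ k ∈ s, diagT M N (x k) t := by
  classical
  induction s using Finset.induction_on with
  | empty => simp [diagT_zero_apply]
  | insert _ _ h ih =>
      rw [Finset.sum_insert h, Finset.sum_insert h, diagT_add, ih]

/-- Generic evaluation of `Σ_j diagT(y j)(t j)` at `y = Σ_k ε_k single_{j_k} x_k`. -/
lemma Dgen {b c : ℕ} (M N : Type*) [AddCommGroup M] [Module (MonoidAlgebra ℤ π) M]
    [AddCommGroup N] [Module (MonoidAlgebra ℤ π) N]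
    (t : Fin b → M ⊗[ℤ] N) (jdx : Fin c → Fin b) (eps : Fin c → ℤ)
    (x : Fin c → MonoidAlgebra ℤ π) :
    ∑ j, diagT M N ((∑ k, eps k • Pi.single (jdx k) (x k) :
        Fin b → MonoidAlgebra ℤ π) j) (t j)
      = ∑ k, eps k • diagT M N (x k) (t (jdx k)) := by
  have h1 : ∀ j : Fin b,
      diagT M N ((∑ k, eps k • Pi.single (jdx k) (x k) :
          Fin b → MonoidAlgebra ℤ π) j) (t j)
        = ∑ k : Fin c, eps k • diagT M N ((Pi.single (jdx k) (x k) : Fin b → MonoidAlgebra ℤ π) j) (t j) := by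
    intro j
    rw [Finset.sum_apply, diagT_sum_apply]
    refine Finset.sum_congr rfl fun k _ => ?_
    rw [Pi.smul_apply, diagT_zsmul]
  rw [Finset.sum_congr rfl fun j _ => h1 j, Finset.sum_comm]
  refine Finset.sum_congr rfl fun k _ => ?_
  rw [← Finset.smul_sum]
  congr 1
  rw [Finset.sum_eq_single (jdx k)]
  · rw [Pi.single_eq_same]
  · intro j _ hj
    rw [Pi.single_eq_of_ne hj, diagT_zero_apply]
  · intro h; exact absurd (Finset.mem_univ _) h

end stmt8aux

namespace stmt8aux
open stmt8

variable {π : Type*} [Group π] {a : ℕ}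
  (ρ : FreeGroup (Fin a) →* π)
  (α : FreeGroup (Fin a) → (Fin a → MonoidAlgebra ℤ π))
  (γ : FreeGroup (Fin a) →
      (Fin a → MonoidAlgebra ℤ π) ⊗[ℤ] (Fin a → MonoidAlgebra ℤ π))
  (hα : ∀ u v : FreeGroup (Fin a),
      α (u * v) = α u + (MonoidAlgebra.of ℤ π (ρ u)) • α v)
  (hγ : ∀ u v : FreeGroup (Fin a),
      γ (u * v) = γ u + stmt8.diagT _ _ (MonoidAlgebra.of ℤ π (ρ u)) (γ v)
        + (α u) ⊗ₜ[ℤ] ((MonoidAlgebra.of ℤ π (ρ u)) • α v))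

lemma diagT_wbar_tmul (M N : Type*) [AddCommGroup M]
    [Module (MonoidAlgebra ℤ π) M] [AddCommGroup N]
    [Module (MonoidAlgebra ℤ π) N] (u : FreeGroup (Fin a)) (x : M) (y : N) :
    diagT M N (wbar π ρ u) (x ⊗ₜ[ℤ] y)
      = (wbar π ρ u • x) ⊗ₜ[ℤ] (wbar π ρ u • y) :=
  diagT_of_tmul M N (ρ u) x y

section conj

variable (w rr : FreeGroup (Fin a)) (hrr : ρ rr = 1)

include hγ in
lemma hγ' (u v : FreeGroup (Fin a)) :
    γ (u * v) = γ u + diagT _ _ (wbar π ρ u) (γ v)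
      + (α u) ⊗ₜ[ℤ] (wbar π ρ u • α v) := hγ u v

include hrr

lemma wbar_rel : wbar π ρ rr = 1 := by rw [wbar_def, hrr, map_one]

lemma wbar_rel_inv : wbar π ρ rr⁻¹ = 1 := by
  rw [wbar_def, map_inv, hrr, inv_one, map_one]

lemma conj_rho (ε : ℤ) : ρ (w * rr ^ ε * w⁻¹) = 1 := by
  rw [map_mul, map_mul, map_zpow, hrr, one_zpow, mul_one, map_inv,
    mul_inv_cancel]

include hα

lemma alpha_rel_inv : α rr⁻¹ = - α rr := by
  rw [alpha_inv ρ α hα, wbar_rel_inv ρ rr hrr, one_smul]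

lemma conj_alpha_pos : α (w * rr * w⁻¹) = wbar π ρ w • α rr := by
  rw [hα' ρ α hα, hα' ρ α hα, wbar_mul, wbar_rel ρ rr hrr, mul_one,
    smul_alpha_inv ρ α hα w]
  abel

lemma conj_alpha_neg : α (w * rr⁻¹ * w⁻¹) = -(wbar π ρ w • α rr) := by
  rw [hα' ρ α hα, hα' ρ α hα, wbar_mul, wbar_rel_inv ρ rr hrr, mul_one,
    smul_alpha_inv ρ α hα w, alpha_rel_inv ρ α hα rr hrr, smul_neg]
  abel

lemma conj_alpha (ε : ℤ) (hε : ε = 1 ∨ ε = -1) :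
    α (w * rr ^ ε * w⁻¹) = ε • (wbar π ρ w • α rr) := by
  rcases hε with h | h <;> subst h
  · rw [zpow_one, conj_alpha_pos ρ α hα w rr hrr, one_smul]
  · rw [zpow_neg_one, conj_alpha_neg ρ α hα w rr hrr, neg_smul, one_smul]

include hγ

lemma gamma_rel_inv : γ rr⁻¹ = (α rr) ⊗ₜ[ℤ] (α rr) - γ rr := by
  rw [gamma_inv ρ α γ hα hγ, wbar_rel_inv ρ rr hrr, diagT_one,
    LinearMap.id_apply]

omit hα hγ hrr in
lemma diagT_winv (t : (Fin a → MonoidAlgebra ℤ π) ⊗[ℤ] (Fin a → MonoidAlgebra ℤ π)) :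
    diagT _ _ (wbar π ρ w) (diagT _ _ (wbar π ρ w⁻¹) t) = t := by
  rw [← diagT_mul, wbar_mul_inv, diagT_one, LinearMap.id_apply]

lemma conj_gamma_pos :
    γ (w * rr * w⁻¹) = diagT _ _ (wbar π ρ w) (γ rr)
      + (α w) ⊗ₜ[ℤ] (wbar π ρ w • α rr)
      - (wbar π ρ w • α rr) ⊗ₜ[ℤ] (α w) := by
  rw [hγ' ρ α γ hγ, hγ' ρ α γ hγ, wbar_mul, wbar_rel ρ rr hrr, mul_one,
    gamma_inv ρ α γ hα hγ, diagT_winv ρ w,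
    hα' ρ α hα, smul_alpha_inv ρ α hα w, TensorProduct.tmul_neg,
    TensorProduct.add_tmul]
  abel

lemma conj_gamma_neg :
    γ (w * rr⁻¹ * w⁻¹)
      = -(diagT _ _ (wbar π ρ w) (γ rr))
        - (α w) ⊗ₜ[ℤ] (wbar π ρ w • α rr)
        + (wbar π ρ w • α rr) ⊗ₜ[ℤ] (α w)
        + (wbar π ρ w • α rr) ⊗ₜ[ℤ] (wbar π ρ w • α rr) := by
  rw [hγ' ρ α γ hγ, hγ' ρ α γ hγ, wbar_mul, wbar_rel_inv ρ rr hrr, mul_one,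
    gamma_rel_inv ρ α γ hα hγ rr hrr, gamma_inv ρ α γ hα hγ w,
    diagT_winv ρ w, alpha_rel_inv ρ α hα rr hrr,
    hα' ρ α hα, smul_alpha_inv ρ α hα w, alpha_rel_inv ρ α hα rr hrr,
    smul_neg, map_sub, TensorProduct.tmul_neg, TensorProduct.add_tmul,
    TensorProduct.neg_tmul, TensorProduct.tmul_neg]
  rw [diagT_wbar_tmul ρ]
  simp only [TensorProduct.neg_tmul, TensorProduct.tmul_neg, neg_neg]
  abel

lemma conj_gamma (ε : ℤ) (hε : ε = 1 ∨ ε = -1) :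
    γ (w * rr ^ ε * w⁻¹)
      = ε • diagT _ _ (wbar π ρ w) (γ rr)
        + ε • ((α w) ⊗ₜ[ℤ] (wbar π ρ w • α rr))
        - ε • ((wbar π ρ w • α rr) ⊗ₜ[ℤ] (α w))
        - ((ε - 1) / 2) • ((wbar π ρ w • α rr) ⊗ₜ[ℤ] (wbar π ρ w • α rr)) := by
  rcases hε with h | h <;> subst h
  · rw [zpow_one, conj_gamma_pos ρ α γ hα hγ w rr hrr]
    norm_num
  · rw [zpow_neg_one, conj_gamma_neg ρ α γ hα hγ w rr hrr]
    norm_num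
    abel

end conj

end stmt8aux


open stmt8 stmt8aux in
set_option maxHeartbeats 1000000 in
/-- Let `π`, the presentation complex `C₂ → C₁ → C₀`, `α`,
`γ` be as in Statement 7, and let `s = Π_k w_k ρ_{j_k}^{ε_k} w_k⁻¹` be an
identity of the presentation (so substituting the relators `r_{j_k}` for the
letters `ρ_{j_k}` yields the trivial element of the free group `F`).  Let `C₃`
have a basis element `h³` with `∂₃(h³) = Σ_k ε_k w̄_k h²_{j_k} ∈ C₂`, and let
`Δ₀(h³) = h⁰⊗h³ + h³⊗h⁰ + Σ_k ε_k (α(w_k)⊗w_kh²_{j_k} + w_kh²_{j_k}⊗α(w_k))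
+ Σ_k δ_k w_k·(h²_{j_k}⊗α(r_{j_k})) - Σ_{l<k} ε_lw_lh²_{j_l}⊗ε_kw_kα(r_{j_k})`
with `δ_k = (ε_k-1)/2` and `·` the diagonal action.  Then, together with
Trotter's formulae in degrees ≤ 2, the chain map condition holds in degree 3:
`∂_⊗(Δ₀(h³)) = Δ₀(∂₃(h³))` (components in `C₀⊗C₂`, `C₁⊗C₁`, `C₂⊗C₀`, with the
sign convention `∂_⊗(x⊗y) = x⊗∂y + (-1)^q ∂x⊗y`). -/
theorem stmt_8 (π : Type*) [Group π] (a b c : ℕ)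
    (ρ : FreeGroup (Fin a) →* π)
    (r : Fin b → FreeGroup (Fin a))
    (hsurj : Function.Surjective ρ)
    (hker : ρ.ker = Subgroup.normalClosure (Set.range r))
    (hrel : ∀ j : Fin b, ρ (r j) = 1)
    (α : FreeGroup (Fin a) → (Fin a → MonoidAlgebra ℤ π))
    (hα1 : ∀ i : Fin a, α (FreeGroup.of i) = Pi.single i 1)
    (hα : ∀ u v : FreeGroup (Fin a),
      α (u * v) = α u + (MonoidAlgebra.of ℤ π (ρ u)) • α v)
    (γ : FreeGroup (Fin a) →
      (Fin a → MonoidAlgebra ℤ π) ⊗[ℤ] (Fin a → MonoidAlgebra ℤ π))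
    (hγ0 : ∀ i : Fin a, γ (FreeGroup.of i) = 0)
    (hγ : ∀ u v : FreeGroup (Fin a),
      γ (u * v) = γ u + stmt8.diagT _ _ (MonoidAlgebra.of ℤ π (ρ u)) (γ v)
        + (α u) ⊗ₜ[ℤ] ((MonoidAlgebra.of ℤ π (ρ u)) • α v))
    -- the identity s = Π_k w_k r_{j_k}^{ε_k} w_k⁻¹ of the presentation:
    (w : Fin c → FreeGroup (Fin a)) (jdx : Fin c → Fin b) (eps : Fin c → ℤ)
    (heps : ∀ k : Fin c, eps k = 1 ∨ eps k = -1)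
    (hident : (List.ofFn
      (fun k : Fin c => w k * (r (jdx k)) ^ (eps k) * (w k)⁻¹)).prod = 1) :
    -- ∂_⊗(Δ₀(h³)) = Δ₀(∂₃(h³)), component in C₀ ⊗ C₂:
    (TensorProduct.map LinearMap.id (stmt8.d3L π a b c ρ w jdx eps)
        ((1 : MonoidAlgebra ℤ π) ⊗ₜ[ℤ] (1 : MonoidAlgebra ℤ π))
      + TensorProduct.map (stmt8.d1L π a ρ) LinearMap.id
          (stmt8.t12 π a b c ρ α w jdx eps)
      = stmt8.D02 π a b ρ (stmt8.bdry3 π a b c ρ w jdx eps)) ∧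
    -- component in C₁ ⊗ C₁:
    (TensorProduct.map LinearMap.id (stmt8.d2L π a b ρ r α)
        (stmt8.t12 π a b c ρ α w jdx eps)
      - TensorProduct.map (stmt8.d2L π a b ρ r α) LinearMap.id
          (stmt8.t21 π a b c ρ r α w jdx eps)
      = stmt8.D11 π a b ρ r γ (stmt8.bdry3 π a b c ρ w jdx eps)) ∧
    -- component in C₂ ⊗ C₀:
    (TensorProduct.map LinearMap.id (stmt8.d1L π a ρ)
        (stmt8.t21 π a b c ρ r α w jdx eps)
      + TensorProduct.map (stmt8.d3L π a b c ρ w jdx eps) LinearMap.id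
          ((1 : MonoidAlgebra ℤ π) ⊗ₜ[ℤ] (1 : MonoidAlgebra ℤ π))
      = stmt8.D20 π a b ρ (stmt8.bdry3 π a b c ρ w jdx eps)) := by
  classical
  have hsm1 : ∀ x : MonoidAlgebra ℤ π, x • (1 : MonoidAlgebra ℤ π) = x := by
    intro x; rw [smul_eq_mul, mul_one]
  refine ⟨?_, ?_, ?_⟩
  · -- C₀ ⊗ C₂
    rw [TensorProduct.map_tmul, LinearMap.id_apply, d3L_apply, one_smul]
    unfold stmt8.bdry3 stmt8.t12 stmt8.D02
    rw [TensorProduct.tmul_sum, map_sum, Dgen, ← Finset.sum_add_distrib]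
    refine Finset.sum_congr rfl fun k _ => ?_
    rw [map_smul, TensorProduct.map_tmul, LinearMap.id_apply,
      d1L_alpha ρ α hα hα1, diagT_wbar_tmul ρ, hsm1, ← single_eq_smul,
      TensorProduct.tmul_smul, ← smul_add]
    congr 1
    rw [TensorProduct.sub_tmul]
    abel
  · -- C₁ ⊗ C₁
    have hL1 : TensorProduct.map LinearMap.id (d2L π a b ρ r α)
        (stmt8.t12 π a b c ρ α w jdx eps)
        = ∑ k, eps k • ((α (w k)) ⊗ₜ[ℤ] (wbar π ρ (w k) • α (r (jdx k)))) := by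
      unfold stmt8.t12
      rw [map_sum]
      refine Finset.sum_congr rfl fun k _ => ?_
      rw [map_smul, TensorProduct.map_tmul, LinearMap.id_apply, d2L_single]
    have hL2 : TensorProduct.map (d2L π a b ρ r α) LinearMap.id
        (stmt8.t21 π a b c ρ r α w jdx eps)
        = (∑ k, eps k • ((wbar π ρ (w k) • α (r (jdx k))) ⊗ₜ[ℤ] α (w k)))
          + (∑ k, ((eps k - 1)/2) • ((wbar π ρ (w k) • α (r (jdx k))) ⊗ₜ[ℤ]
              (wbar π ρ (w k) • α (r (jdx k)))))
          - (∑ k, ∑ l ∈ Finset.Iio k,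
              (eps l • (wbar π ρ (w l) • α (r (jdx l)))) ⊗ₜ[ℤ]
              (eps k • (wbar π ρ (w k) • α (r (jdx k))))) := by
      unfold stmt8.t21
      rw [map_sub, map_add, map_sum, map_sum, map_sum]
      congr 1
      · congr 1
        · refine Finset.sum_congr rfl fun k _ => ?_
          rw [map_smul, TensorProduct.map_tmul, LinearMap.id_apply, d2L_single]
        · refine Finset.sum_congr rfl fun k _ => ?_
          rw [map_smul, diagT_wbar_tmul ρ, TensorProduct.map_tmul,
            LinearMap.id_apply, ← single_eq_smul, d2L_single]
      · refine Finset.sum_congr rfl fun k _ => ?_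
        rw [map_sum]
        refine Finset.sum_congr rfl fun l _ => ?_
        rw [TensorProduct.map_tmul, LinearMap.id_apply, map_smul, d2L_single]
    have hR : stmt8.D11 π a b ρ r γ (stmt8.bdry3 π a b c ρ w jdx eps)
        = - ∑ k, eps k • diagT (Fin a → MonoidAlgebra ℤ π)
            (Fin a → MonoidAlgebra ℤ π) (wbar π ρ (w k)) (γ (r (jdx k))) := by
      unfold stmt8.D11 stmt8.bdry3
      rw [Dgen, ← Finset.sum_neg_distrib]
      refine Finset.sum_congr rfl fun k _ => ?_
      rw [map_neg, smul_neg]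
    have hv : ∀ u ∈ List.ofFn (fun k : Fin c =>
        w k * (r (jdx k)) ^ (eps k) * (w k)⁻¹), ρ u = 1 := by
      intro u hu
      rw [List.mem_ofFn] at hu
      obtain ⟨k, rfl⟩ := hu
      exact conj_rho ρ (w k) (r (jdx k)) (hrel (jdx k)) (eps k)
    have hgp := gamma_list_prod ρ α γ hα hγ
      (List.ofFn (fun k : Fin c => w k * (r (jdx k)) ^ (eps k) * (w k)⁻¹)) hv
    rw [hident, gamma_one ρ α γ hα hγ, map_ofFn_sum, pairs_ofFn] at hgp
    have hgk : ∀ k : Fin c, γ (w k * (r (jdx k)) ^ (eps k) * (w k)⁻¹)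
        = eps k • diagT (Fin a → MonoidAlgebra ℤ π)
            (Fin a → MonoidAlgebra ℤ π) (wbar π ρ (w k)) (γ (r (jdx k)))
          + eps k • ((α (w k)) ⊗ₜ[ℤ] (wbar π ρ (w k) • α (r (jdx k))))
          - eps k • ((wbar π ρ (w k) • α (r (jdx k))) ⊗ₜ[ℤ] (α (w k)))
          - ((eps k - 1) / 2) • ((wbar π ρ (w k) • α (r (jdx k))) ⊗ₜ[ℤ]
              (wbar π ρ (w k) • α (r (jdx k)))) :=
      fun k => conj_gamma ρ α γ hα hγ (w k) (r (jdx k)) (hrel (jdx k))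
        (eps k) (heps k)
    have hak : ∀ k : Fin c, α (w k * (r (jdx k)) ^ (eps k) * (w k)⁻¹)
        = eps k • (wbar π ρ (w k) • α (r (jdx k))) :=
      fun k => conj_alpha ρ α hα (w k) (r (jdx k)) (hrel (jdx k))
        (eps k) (heps k)
    simp only [hgk, hak] at hgp
    rw [Finset.sum_sub_distrib, Finset.sum_sub_distrib,
      Finset.sum_add_distrib] at hgp
    have hpair : (∑ l, (eps l • (wbar π ρ (w l) • α (r (jdx l)))) ⊗ₜ[ℤ]
          (∑ k ∈ Finset.Ioi l, eps k • (wbar π ρ (w k) • α (r (jdx k)))))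
        = ∑ k, ∑ l ∈ Finset.Iio k,
            (eps l • (wbar π ρ (w l) • α (r (jdx l)))) ⊗ₜ[ℤ]
            (eps k • (wbar π ρ (w k) • α (r (jdx k)))) := by
      rw [sum_Iio_swap (fun l k =>
        (eps l • (wbar π ρ (w l) • α (r (jdx l)))) ⊗ₜ[ℤ]
          (eps k • (wbar π ρ (w k) • α (r (jdx k)))))]
      exact Finset.sum_congr rfl fun l _ => TensorProduct.tmul_sum _ _ _
    rw [hpair] at hgp
    rw [hL1, hL2, hR]
    refine eq_neg_of_add_eq_zero_left ?_
    rw [hgp]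
    abel
  · -- C₂ ⊗ C₀
    have hz : ∀ j : Fin b,
        d1L π a ρ (α (r j)) = 0 := fun j =>
      d1L_alpha_rel ρ α hα (r j) (hrel j) hα1
    have h2 : (∑ k, TensorProduct.map LinearMap.id (d1L π a ρ)
        (((eps k - 1)/2) • diagT (Fin b → MonoidAlgebra ℤ π)
            (Fin a → MonoidAlgebra ℤ π) (wbar π ρ (w k))
          ((Pi.single (jdx k) (1 : MonoidAlgebra ℤ π)) ⊗ₜ[ℤ] (α (r (jdx k))))))
        = 0 := by
      refine Finset.sum_eq_zero fun k _ => ?_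
      rw [map_smul, diagT_wbar_tmul ρ, TensorProduct.map_tmul,
        d1L_smul, hz, mul_zero, TensorProduct.tmul_zero, smul_zero]
    have h3 : (∑ k, TensorProduct.map LinearMap.id (d1L π a ρ)
        (∑ l ∈ Finset.Iio k,
          (eps l • Pi.single (jdx l) (wbar π ρ (w l)) :
              Fin b → MonoidAlgebra ℤ π)
            ⊗ₜ[ℤ] (eps k • (wbar π ρ (w k) • α (r (jdx k)))))) = 0 := by
      refine Finset.sum_eq_zero fun k _ => ?_
      rw [map_sum]
      refine Finset.sum_eq_zero fun l _ => ?_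
      rw [TensorProduct.map_tmul, map_smul, map_smul, d1L_smul, hz, mul_zero,
        smul_zero, TensorProduct.tmul_zero]
    rw [TensorProduct.map_tmul, LinearMap.id_apply, d3L_apply, one_smul]
    unfold stmt8.bdry3 stmt8.t21 stmt8.D20
    rw [TensorProduct.sum_tmul, map_sub, map_add, map_sum, map_sum, map_sum,
      h2, h3, add_zero, sub_zero, Dgen, ← Finset.sum_add_distrib]
    refine Finset.sum_congr rfl fun k _ => ?_
    rw [map_smul, TensorProduct.map_tmul, LinearMap.id_apply,
      d1L_alpha ρ α hα hα1, diagT_wbar_tmul ρ, hsm1, ← single_eq_smul,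
      ← TensorProduct.smul_tmul', ← smul_add]
    congr 1
    rw [TensorProduct.tmul_sub]
    abel
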